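/- Let X be a functionally Hausdorff space containing a compact subset K ⊆ X that is not scattered. Then there exists a surjective continuous map from X onto [0,1]. -/

import Mathlib

open Cardinal Set Topology

universe u

def FunctionallyHausdorff (X : Type u) [TopologicalSpace X] : Prop :=
  ∀ x y : X, x ≠ y → ∃ f : X → unitInterval, Continuous f ∧ f x = 0 ∧ f y = 1

def IsCechComplete (X : Type u) [TopologicalSpace X] : Prop :=
  ∃ (K : Type u) (_ : TopologicalSpace K) (e : X → K),
    CompactSpace K ∧ T2Space K ∧ IsEmbedding e ∧ DenseRange e ∧ IsGδ (Set.range e)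

noncomputable def lindelofNumber (X : Type u) [TopologicalSpace X] : Cardinal.{u} :=
  sInf {κ : Cardinal.{u} | ℵ₀ ≤ κ ∧ ∀ U : Set (Set X), (∀ u ∈ U, IsOpen u) → ⋃₀ U = Set.univ →
    ∃ V ⊆ U, #↥V ≤ κ ∧ ⋃₀ V = Set.univ}

noncomputable def pseudocharacter (X : Type u) [TopologicalSpace X] : Cardinal.{u} :=
  sInf {κ : Cardinal.{u} | ℵ₀ ≤ κ ∧ ∀ x : X, ∃ 𝒰 : Set (Set X),
    #↥𝒰 ≤ κ ∧ (∀ U ∈ 𝒰, IsOpen U ∧ x ∈ U) ∧ ⋂₀ 𝒰 = ⋂₀ {U : Set X | IsOpen U ∧ x ∈ U}}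

def IsScatteredSet {X : Type u} [TopologicalSpace X] (S : Set X) : Prop :=
  ∀ T ⊆ S, T.Nonempty → ∃ x ∈ T, ∃ U : Set X, IsOpen U ∧ U ∩ T = {x}

def IsKAnalytic (X : Type u) [TopologicalSpace X] : Prop :=
  ∃ (P : Type u) (_ : TopologicalSpace P) (f : P → X),
    LindelofSpace P ∧ IsCechComplete P ∧ Continuous f ∧ Function.Surjective f

def IsAnalyticSpace (X : Type u) [TopologicalSpace X] : Prop :=
  ∃ (P : Type u) (_ : TopologicalSpace P), PolishSpace P ∧
    ∃ f : P → X, Continuous f ∧ Function.Surjective f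

noncomputable def boundingNumber : Cardinal.{0} :=
  sInf {κ : Cardinal.{0} | ∃ B : Set (ℕ → ℕ), #↥B = κ ∧
    ∀ y : ℕ → ℕ, ∃ x ∈ B, {n : ℕ | ¬ x n ≤ y n}.Infinite}

open Filter in
lemma exists_binary (t : ℝ) (h0 : 0 ≤ t) (h1 : t ≤ 1) :
    ∃ b : ℕ → Bool, ∑' n, (cond (b n) (1:ℝ) 0) / 2^(n+1) = t := by
  classical
  let r : ℕ → ℝ := fun n =>
    Nat.rec 0 (fun n rn => rn + if rn + ((2:ℝ)^(n+1))⁻¹ ≤ t then ((2:ℝ)^(n+1))⁻¹ else 0) n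
  let b : ℕ → Bool := fun n => decide (r n + ((2:ℝ)^(n+1))⁻¹ ≤ t)
  have hrsucc : ∀ n, r (n+1) = r n + if r n + ((2:ℝ)^(n+1))⁻¹ ≤ t then ((2:ℝ)^(n+1))⁻¹ else 0 :=
    fun n => rfl
  have hkey : ∀ n : ℕ, ((2:ℝ)^n)⁻¹ = 2 * ((2:ℝ)^(n+1))⁻¹ := by
    intro n
    rw [pow_succ]
    field_simp
  have hinv : ∀ n, r n ≤ t ∧ t ≤ r n + ((2:ℝ)^n)⁻¹ := by
    intro n
    induction n with
    | zero => simpa [r] using ⟨h0, h1⟩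
    | succ n ih =>
      rw [hrsucc]
      split_ifs with h
      · refine ⟨h, ?_⟩
        have := ih.2
        rw [hkey n] at this
        linarith
      · push_neg at h
        exact ⟨by simpa using ih.1, by linarith⟩
  have hpartial : ∀ n, ∑ k ∈ Finset.range n, (cond (b k) (1:ℝ) 0) / 2^(k+1) = r n := by
    intro n
    induction n with
    | zero => simp [r]
    | succ n ih =>
      rw [Finset.sum_range_succ, ih, hrsucc]
      by_cases h : r n + ((2:ℝ)^(n+1))⁻¹ ≤ t
      · simp [b, h, one_div]
      · simp [b, h]
  have hlim : Tendsto (fun n => r n) atTop (𝓝 t) := by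
    have h2 : Tendsto (fun n : ℕ => ((2:ℝ)^n)⁻¹) atTop (𝓝 0) := by
      simpa [one_div] using
        tendsto_pow_atTop_nhds_zero_of_lt_one (by norm_num : (0:ℝ) ≤ 1/2) (by norm_num)
    have h1' : Tendsto (fun n : ℕ => t - ((2:ℝ)^n)⁻¹) atTop (𝓝 t) := by
      simpa using tendsto_const_nhds.sub h2
    exact tendsto_of_tendsto_of_tendsto_of_le_of_le h1' tendsto_const_nhds
      (fun n => by linarith [(hinv n).2]) (fun n => (hinv n).1)
  have hs : HasSum (fun n => (cond (b n) (1:ℝ) 0) / 2^(n+1)) t := by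
    rw [hasSum_iff_tendsto_nat_of_nonneg]
    · simpa only [hpartial] using hlim
    · intro i; cases hb : b i <;> simp
  exact ⟨b, hs.tsum_eq⟩

section TreeAux
open Filter
variable {Q : Type u} [TopologicalSpace Q]

lemma aux_shrink [RegularSpace Q] {O : Set Q} {p : Q} (hO : IsOpen O) (hp : p ∈ O) :
    ∃ V : Set Q, IsOpen V ∧ p ∈ V ∧ closure V ⊆ O := by
  obtain ⟨t, ht, htc, hts⟩ := exists_mem_nhds_isClosed_subset (hO.mem_nhds hp)
  exact ⟨interior t, isOpen_interior, mem_interior_iff_mem_nhds.2 ht,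
    (closure_minimal interior_subset htc).trans hts⟩

lemma aux_split [T2Space Q] [RegularSpace Q] {S : Set Q}
    (hS : ∀ y ∈ S, ∀ W : Set Q, IsOpen W → y ∈ W → ∃ z, z ∈ W ∩ S ∧ z ≠ y)
    {U : Set Q} {y : Q} (hU : IsOpen U) (hy : y ∈ U) (hyS : y ∈ S) :
    ∃ (V : Bool → Set Q) (z : Bool → Q),
      (∀ i, IsOpen (V i)) ∧ (∀ i, z i ∈ V i) ∧ (∀ i, z i ∈ S) ∧
      (∀ i, closure (V i) ⊆ U) ∧ Disjoint (closure (V false)) (closure (V true)) := by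
  obtain ⟨z, ⟨hzU, hzS⟩, hzy⟩ := hS y hyS U hU hy
  obtain ⟨W0, W1, hW0, hW1, hyW0, hzW1, hWd⟩ := t2_separation hzy.symm
  obtain ⟨V0, hV0o, hyV0, hV0c⟩ := aux_shrink (hU.inter hW0) ⟨hy, hyW0⟩
  obtain ⟨V1, hV1o, hzV1, hV1c⟩ := aux_shrink (hU.inter hW1) ⟨hzU, hzW1⟩
  refine ⟨fun i => bif i then V1 else V0, fun i => bif i then z else y, ?_, ?_, ?_, ?_, ?_⟩
  · intro i; cases i
    · exact hV0o
    · exact hV1o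
  · intro i; cases i
    · exact hyV0
    · exact hzV1
  · intro i; cases i
    · exact hyS
    · exact hzS
  · intro i; cases i
    · exact hV0c.trans (inter_subset_left)
    · exact hV1c.trans (inter_subset_left)
  · exact hWd.mono (hV0c.trans inter_subset_right) (hV1c.trans inter_subset_right)

lemma exists_tree [T2Space Q] [RegularSpace Q] {S : Set Q}
    (hS : ∀ y ∈ S, ∀ W : Set Q, IsOpen W → y ∈ W → ∃ z, z ∈ W ∩ S ∧ z ≠ y)
    (hne : S.Nonempty) :
    ∃ (U : List Bool → Set Q) (y : List Bool → Q),
      (∀ s, IsOpen (U s)) ∧ (∀ s, y s ∈ U s) ∧ (∀ s, y s ∈ S) ∧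
      (∀ s i, closure (U (i :: s)) ⊆ U s) ∧
      (∀ s, Disjoint (closure (U (false :: s))) (closure (U (true :: s)))) := by
  classical
  obtain ⟨y0, hy0⟩ := hne
  have key : ∀ p : Set Q × Q, ∃ c : Bool → Set Q × Q,
      IsOpen p.1 → p.2 ∈ p.1 → p.2 ∈ S →
        (∀ i, IsOpen (c i).1) ∧ (∀ i, (c i).2 ∈ (c i).1) ∧ (∀ i, (c i).2 ∈ S) ∧
        (∀ i, closure ((c i).1) ⊆ p.1) ∧
        Disjoint (closure ((c false).1)) (closure ((c true).1)) := by
    intro p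
    by_cases h : IsOpen p.1 ∧ p.2 ∈ p.1 ∧ p.2 ∈ S
    · obtain ⟨V, z, h1, h2, h3, h4, h5⟩ := aux_split hS h.1 h.2.1 h.2.2
      exact ⟨fun i => (V i, z i), fun _ _ _ => ⟨h1, h2, h3, h4, h5⟩⟩
    · exact ⟨fun _ => p, fun h1 h2 h3 => absurd ⟨h1, h2, h3⟩ h⟩
  choose c hc using key
  let node : List Bool → Set Q × Q :=
    fun s => s.rec (Set.univ, y0) (fun i s ih => c ih i)
  have hcons : ∀ i s, node (i :: s) = c (node s) i := fun _ _ => rfl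
  have hnode : ∀ s, IsOpen (node s).1 ∧ (node s).2 ∈ (node s).1 ∧ (node s).2 ∈ S := by
    intro s
    induction s with
    | nil => exact ⟨isOpen_univ, mem_univ _, hy0⟩
    | cons i s ih =>
      obtain ⟨h1, h2, h3⟩ := ih
      obtain ⟨g1, g2, g3, g4, g5⟩ := hc (node s) h1 h2 h3
      rw [hcons]
      exact ⟨g1 i, g2 i, g3 i⟩
  refine ⟨fun s => (node s).1, fun s => (node s).2, fun s => (hnode s).1,
    fun s => (hnode s).2.1, fun s => (hnode s).2.2, ?_, ?_⟩
  · intro s i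
    obtain ⟨h1, h2, h3⟩ := hnode s
    show closure (node (i :: s)).1 ⊆ (node s).1
    rw [hcons]
    exact (hc (node s) h1 h2 h3).2.2.2.1 i
  · intro s
    obtain ⟨h1, h2, h3⟩ := hnode s
    show Disjoint (closure (node (false :: s)).1) (closure (node (true :: s)).1)
    rw [hcons, hcons]
    exact (hc (node s) h1 h2 h3).2.2.2.2

lemma tree_disj {U : List Bool → Set Q}
    (hsub : ∀ s i, closure (U (i :: s)) ⊆ U s)
    (hdisj : ∀ s, Disjoint (closure (U (false :: s))) (closure (U (true :: s)))) :
    ∀ s t : List Bool, s.length = t.length → s ≠ t →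
      Disjoint (closure (U s)) (closure (U t)) := by
  intro s
  induction s with
  | nil =>
    intro t hl hne
    cases t with
    | nil => exact absurd rfl hne
    | cons j t => simp at hl
  | cons i s ih =>
    intro t hl hne
    cases t with
    | nil => simp at hl
    | cons j t =>
      by_cases hst : s = t
      · subst hst
        have hij : i ≠ j := by
          intro h; exact hne (by rw [h])
        cases i <;> cases j
        · exact absurd rfl hij
        · exact hdisj s
        · exact (hdisj s).symm
        · exact absurd rfl hij
      · have hd := ih t (by simpa using hl) hst
        exact hd.mono ((hsub s i).trans subset_closure) ((hsub t j).trans subset_closure)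

end TreeAux

theorem stmt3 {X : Type u} [TopologicalSpace X] (hX : FunctionallyHausdorff X)
    (K : Set X) (hK : IsCompact K) (hns : ¬ IsScatteredSet K) :
    ∃ f : X → unitInterval, Continuous f ∧ Function.Surjective f := by
  classical
  rw [IsScatteredSet] at hns
  push_neg at hns
  obtain ⟨T, hTK, hTne, hT⟩ := hns
  -- the cube
  let Q : Type u := C(X, unitInterval) → unitInterval
  let e : X → Q := fun x f => f x
  have he : Continuous e := continuous_pi fun f => f.continuous
  have hinj : Function.Injective e := by
    intro a b hab
    by_contra hne
    obtain ⟨f, hf, hfa, hfb⟩ := hX a b hne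
    have h2 : f a = f b := congrFun hab ⟨f, hf⟩
    rw [hfa, hfb] at h2
    exact zero_ne_one (α := ℝ) (congrArg Subtype.val h2)
  let S : Set Q := e '' T
  have hSne : S.Nonempty := hTne.image e
  have hS : ∀ y ∈ S, ∀ W : Set Q, IsOpen W → y ∈ W → ∃ z, z ∈ W ∩ S ∧ z ≠ y := by
    rintro y ⟨x, hxT, rfl⟩ W hW hyW
    have hne := hT x hxT (e ⁻¹' W) (hW.preimage he)
    have hex : ∃ x', x' ∈ e ⁻¹' W ∩ T ∧ x' ≠ x := by
      by_contra h
      push_neg at h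
      exact hne (Set.eq_singleton_iff_unique_mem.2
        ⟨⟨hyW, hxT⟩, fun z hz => by_contra fun hzx => hzx (h z hz)⟩)
    obtain ⟨x', ⟨hx'W, hx'T⟩, hx'⟩ := hex
    exact ⟨e x', ⟨hx'W, ⟨x', hx'T, rfl⟩⟩, fun hc => hx' (hinj hc)⟩
  obtain ⟨U, yy, hUopen, hyU, hyS, hsub, hdisj⟩ := exists_tree hS hSne
  -- level sets
  let A : ℕ → Bool → Set Q := fun n i => ⋃ v : List.Vector Bool n, closure (U (i :: v.1))
  have hAclosed : ∀ n i, IsClosed (A n i) :=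
    fun n i => isClosed_iUnion_of_finite fun v => isClosed_closure
  have hAB : ∀ n, Disjoint (A n false) (A n true) := by
    intro n
    rw [Set.disjoint_left]
    intro q hq0 hq1
    simp only [A, mem_iUnion] at hq0 hq1
    obtain ⟨v, hv⟩ := hq0
    obtain ⟨w, hw⟩ := hq1
    by_cases hvw : v.1 = w.1
    · exact (hdisj v.1).le_bot ⟨hv, by rw [hvw]; exact hw⟩
    · exact (tree_disj hsub hdisj (false :: v.1) (true :: w.1)
        (by simp [v.2, w.2]) (by simp [hvw])).le_bot ⟨hv, hw⟩
  -- Urysohn functions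
  have hfex : ∀ n, ∃ f : C(Q, ℝ), EqOn f 0 (A n false) ∧ EqOn f 1 (A n true) ∧
      ∀ q, f q ∈ Icc (0:ℝ) 1 :=
    fun n => exists_continuous_zero_one_of_isClosed (hAclosed n false) (hAclosed n true) (hAB n)
  choose f hf0 hf1 hf01 using hfex
  -- the sum function
  have hcont : Continuous (fun q : Q => ∑' n, f n q / 2^(n+1)) := by
    apply continuous_tsum (u := fun n => (1/2:ℝ)^(n+1))
      (fun n => (f n).continuous.div_const _)
    · simpa [pow_succ] using (summable_geometric_two).mul_right (1/2 : ℝ)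
    · intro n q
      have h01 := hf01 n q
      rw [norm_div, Real.norm_eq_abs, Real.norm_eq_abs, abs_of_nonneg (by positivity :
        (0:ℝ) ≤ 2^(n+1)), one_div, inv_pow, ← one_div ((2:ℝ)^(n+1)), div_le_div_iff_of_pos_right
        (by positivity)]
      · exact abs_le.2 ⟨by linarith [h01.1], h01.2⟩
  refine ⟨fun x => Set.projIcc (0:ℝ) 1 zero_le_one (∑' n, f n (e x) / 2^(n+1)),
    continuous_projIcc.comp (hcont.comp he), ?_⟩
  rintro ⟨t, ht⟩
  obtain ⟨b, hb⟩ := exists_binary t ht.1 ht.2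
  -- branch
  let L : ℕ → List Bool := fun n => Nat.rec [] (fun n ih => b n :: ih) n
  have hLsucc : ∀ n, L (n+1) = b n :: L n := fun n => rfl
  have hLlen : ∀ n, (L n).length = n := by
    intro n
    induction n with
    | zero => rfl
    | succ n ih => rw [hLsucc]; simp [ih]
  let Kc : ℕ → Set Q := fun n => closure (U (L (n+1))) ∩ (e '' K)
  have hTS : S ⊆ e '' K := Set.image_mono hTK
  have hKcne : ∀ n, (Kc n).Nonempty :=
    fun n => ⟨yy (L (n+1)), subset_closure (hyU _), hTS (hyS _)⟩
  have hYcomp : IsCompact (e '' K) := hK.image he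
  have hKcsub : ∀ n, Kc (n+1) ⊆ Kc n := by
    intro n
    apply Set.inter_subset_inter_left
    rw [hLsucc (n+1)]
    exact (hsub (L (n+1)) (b (n+1))).trans subset_closure
  have hKcint : (⋂ n, Kc n).Nonempty :=
    IsCompact.nonempty_iInter_of_sequence_nonempty_isCompact_isClosed Kc hKcsub hKcne
      (hYcomp.inter_left isClosed_closure)
      (fun n => isClosed_closure.inter hYcomp.isClosed)
  obtain ⟨q, hq⟩ := hKcint
  obtain ⟨x0, hx0K, rfl⟩ : q ∈ e '' K := (mem_iInter.1 hq 0).2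
  have hval : ∀ n, f n (e x0) = cond (b n) 1 0 := by
    intro n
    have hqn : e x0 ∈ closure (U (L (n+1))) := (mem_iInter.1 hq n).1
    rw [hLsucc n] at hqn
    cases hbn : b n with
    | false =>
      have hmem : e x0 ∈ A n false :=
        mem_iUnion.2 ⟨⟨L n, hLlen n⟩, by rw [← hbn]; exact hqn⟩
      simpa using hf0 n hmem
    | true =>
      have hmem : e x0 ∈ A n true :=
        mem_iUnion.2 ⟨⟨L n, hLlen n⟩, by rw [← hbn]; exact hqn⟩
      simpa using hf1 n hmem
  refine ⟨x0, ?_⟩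
  have hsum : (∑' n, f n (e x0) / 2^(n+1)) = t := by
    rw [tsum_congr (fun n => by rw [hval n])]
    exact hb
  show Set.projIcc (0:ℝ) 1 zero_le_one (∑' n, f n (e x0) / 2^(n+1)) = ⟨t, ht⟩
  rw [hsum]
  exact Set.projIcc_of_mem _ ht
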